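/- Fix n ≥ 1, T > 0, ε₀ ∈ (0,1], and a differentiable function φ : ℝ → ℝ with ε₀ ≤ φ'(r) ≤ ε₀^{−1} for all r ∈ ℝ. Let u : [0,T] × V_n → ℝ be such that t ↦ u(t,x) is differentiable for each x ∈ V_n, u(t,a_i) = 0 for all t ∈ [0,T] and i = 0,1,2, and ∂_t u(t,x) = Δ_n (φ∘u(t,·))(x) for every x ∈ V_n∖V₀ and t ∈ [0,T]. Then the energy estimate holds: ‖u(T,·)‖²_{0,n} + 2ε₀ ∫₀^T E_n(u(t,·), u(t,·)) dt ≤ ‖u(0,·)‖²_{0,n}. -/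

import Mathlib

open scoped Classical
open Real Set

noncomputable section

abbrev Pt : Type := ℝ × ℝ

/-- The three corners of the unit triangle. -/
def sierA : Fin 3 → Pt
  | 0 => (0, 0)
  | 1 => (1 / 2, Real.sqrt 3 / 2)
  | 2 => (1, 0)

/-- The three contractions `φᵢ(x) = (x + aᵢ)/2`. -/
def ctr (i : Fin 3) (x : Pt) : Pt :=
  ((x.1 + (sierA i).1) / 2, (x.2 + (sierA i).2) / 2)

/-- The vertex sets `V n`. -/
def V : ℕ → Finset Pt
  | 0 => {sierA 0, sierA 1, sierA 2}
  | n + 1 => (V n).image (ctr 0) ∪ (V n).image (ctr 1) ∪ (V n).image (ctr 2)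

/-- The (ordered) edge sets: `(x, y) ∈ Ed n` iff `{x,y} ∈ E_n`; each undirected
edge appears with both orientations. -/
def Ed : ℕ → Finset (Pt × Pt)
  | 0 => (V 0 ×ˢ V 0).filter fun p => p.1 ≠ p.2
  | n + 1 => Finset.univ.biUnion fun i : Fin 3 => (Ed n).image fun p => (ctr i p.1, ctr i p.2)

/-- `V* = ⋃ n, V n`. -/
def Vstar : Set Pt := ⋃ n, (V n : Set Pt)

/-- The level-`n` energy `E_n(u,u) = (5/3)^n Σ_{{x,y} ∈ E_n} (u y - u x)²`
(each undirected edge counted once, whence the division by 2). -/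
def En (n : ℕ) (u : Pt → ℝ) : ℝ :=
  (5 / 3 : ℝ) ^ n * (∑ p ∈ Ed n, (u p.2 - u p.1) ^ 2) / 2

/-- The discrete Laplacian `Δ_n u (x) = 5^n Σ_{y ∼ₙ x} (u y - u x)`. -/
def lap (n : ℕ) (u : Pt → ℝ) (x : Pt) : ℝ :=
  (5 : ℝ) ^ n * ∑ p ∈ (Ed n).filter (fun p => p.1 = x), (u p.2 - u p.1)


lemma ctr_mem {n : ℕ} {i : Fin 3} {y : Pt} (hy : y ∈ V n) : ctr i y ∈ V (n+1) := by
  show ctr i y ∈ (V n).image (ctr 0) ∪ (V n).image (ctr 1) ∪ (V n).image (ctr 2)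
  simp only [Finset.mem_union, Finset.mem_image]
  fin_cases i
  · exact Or.inl (Or.inl ⟨y, hy, rfl⟩)
  · exact Or.inl (Or.inr ⟨y, hy, rfl⟩)
  · exact Or.inr ⟨y, hy, rfl⟩

lemma Ed_mem_V {n : ℕ} : ∀ {p : Pt × Pt}, p ∈ Ed n → p.1 ∈ V n ∧ p.2 ∈ V n := by
  induction n with
  | zero =>
    intro p hp
    rw [show Ed 0 = (V 0 ×ˢ V 0).filter (fun p => p.1 ≠ p.2) from rfl, Finset.mem_filter,
      Finset.mem_product] at hp
    exact hp.1
  | succ n ih =>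
    intro p hp
    rw [show Ed (n+1) = Finset.univ.biUnion (fun i : Fin 3 => (Ed n).image fun p => (ctr i p.1, ctr i p.2)) from rfl] at hp
    simp only [Finset.mem_biUnion, Finset.mem_image] at hp
    obtain ⟨i, -, q, hq, rfl⟩ := hp
    exact ⟨ctr_mem (ih hq).1, ctr_mem (ih hq).2⟩

lemma Ed_symm {n : ℕ} : ∀ {p : Pt × Pt}, p ∈ Ed n → (p.2, p.1) ∈ Ed n := by
  induction n with
  | zero =>
    intro p hp
    rw [show Ed 0 = (V 0 ×ˢ V 0).filter (fun p => p.1 ≠ p.2) from rfl, Finset.mem_filter,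
      Finset.mem_product] at hp ⊢
    exact ⟨⟨hp.1.2, hp.1.1⟩, hp.2.symm⟩
  | succ n ih =>
    intro p hp
    rw [show Ed (n+1) = Finset.univ.biUnion (fun i : Fin 3 => (Ed n).image fun p => (ctr i p.1, ctr i p.2)) from rfl] at hp ⊢
    simp only [Finset.mem_biUnion, Finset.mem_image] at hp ⊢
    obtain ⟨i, hi, q, hq, rfl⟩ := hp
    exact ⟨i, hi, (q.2, q.1), ih hq, rfl⟩

lemma mvt_key {phi : ℝ → ℝ} (hphi : Differentiable ℝ phi) {ε₀ : ℝ}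
    (hlo : ∀ r, ε₀ ≤ deriv phi r) (a b : ℝ) :
    ε₀ * (b - a) ^ 2 ≤ (phi b - phi a) * (b - a) := by
  rcases lt_trichotomy a b with h | h | h
  · obtain ⟨c, -, hc⟩ := exists_hasDerivAt_eq_slope phi (deriv phi) h
      hphi.continuous.continuousOn (fun x _ => (hphi x).hasDerivAt)
    rw [eq_div_iff (by linarith : b - a ≠ 0)] at hc
    nlinarith [mul_le_mul_of_nonneg_right (hlo c) (sq_nonneg (b - a))]
  · subst h; simp
  · obtain ⟨c, -, hc⟩ := exists_hasDerivAt_eq_slope phi (deriv phi) h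
      hphi.continuous.continuousOn (fun x _ => (hphi x).hasDerivAt)
    rw [eq_div_iff (by linarith : a - b ≠ 0)] at hc
    nlinarith [mul_le_mul_of_nonneg_right (hlo c) (sq_nonneg (b - a))]

/-- Energy estimate for the finite-difference scheme for `∂_t u = Δ φ(u)`
with zero Dirichlet boundary condition:
`‖u(T,·)‖²_{0,n} + 2ε₀ ∫₀^T E_n(u(t,·),u(t,·)) dt ≤ ‖u(0,·)‖²_{0,n}`. -/
theorem discrete_energy_estimate (n : ℕ) (hn : 1 ≤ n)
    (T : ℝ) (hT : 0 < T) (ε₀ : ℝ) (hε₀ : 0 < ε₀) (hε₀' : ε₀ ≤ 1)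
    (phi : ℝ → ℝ) (hphi : Differentiable ℝ phi)
    (hphi' : ∀ r : ℝ, ε₀ ≤ deriv phi r ∧ deriv phi r ≤ ε₀⁻¹)
    (u : ℝ → Pt → ℝ)
    (hbd : ∀ t ∈ Set.Icc (0 : ℝ) T, ∀ i : Fin 3, u t (sierA i) = 0)
    (hode : ∀ x ∈ (V n : Set Pt), x ∉ (V 0 : Set Pt) →
      ∀ t ∈ Set.Icc (0 : ℝ) T,
        HasDerivAt (fun s => u s x) (lap n (fun z => phi (u t z)) x) t) :
    (∑ x ∈ V n, u T x ^ 2) / 3 ^ n + 2 * ε₀ * ∫ t in (0 : ℝ)..T, En n (u t)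
      ≤ (∑ x ∈ V n, u 0 x ^ 2) / 3 ^ n := by

  have hTmem : T ∈ Set.Icc (0:ℝ) T := ⟨hT.le, le_refl T⟩
  have h0mem : (0:ℝ) ∈ Set.Icc (0:ℝ) T := ⟨le_refl 0, hT.le⟩
  have hV0 : ∀ t ∈ Set.Icc (0:ℝ) T, ∀ x ∈ V 0, u t x = 0 := by
    intro t ht x hx
    have hx' : x = sierA 0 ∨ x = sierA 1 ∨ x = sierA 2 := by
      have : x ∈ ({sierA 0, sierA 1, sierA 2} : Finset Pt) := hx
      simpa using this
    rcases hx' with rfl | rfl | rfl <;> exact hbd t ht _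
  set B : Finset Pt := (V n) \ (V 0) with hB
  set D : ℝ → ℝ := fun t => ∑ x ∈ B, 2 * u t x * lap n (fun z => phi (u t z)) x with hD
  have hmemB : ∀ x ∈ B, x ∈ (V n : Set Pt) ∧ x ∉ (V 0 : Set Pt) := by
    intro x hx
    rw [hB, Finset.mem_sdiff] at hx
    exact ⟨Finset.mem_coe.mpr hx.1, fun h => hx.2 (Finset.mem_coe.mp h)⟩
  -- derivative of the sum of squares
  have hderiv : ∀ t ∈ Set.Icc (0:ℝ) T,
      HasDerivAt (fun s => ∑ x ∈ B, u s x ^ 2) (D t) t := by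
    intro t ht
    apply HasDerivAt.fun_sum
    intro x hx
    obtain ⟨h1, h2⟩ := hmemB x hx
    have h := hode x h1 h2 t ht
    have hmul := h.fun_mul h
    have hfe : (fun s => u s x ^ 2) = fun s => u s x * u s x := by
      funext s; ring
    rw [hfe]
    exact hmul.congr_deriv (by ring)
  -- continuity in time at each vertex of V n
  have hcontz : ∀ z ∈ V n, ContinuousOn (fun s => u s z) (Set.Icc (0:ℝ) T) := by
    intro z hz
    by_cases h0 : z ∈ V 0
    · exact (continuousOn_const (c := (0:ℝ))).congr (fun t ht => hV0 t ht z h0)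
    · intro t ht
      exact ((hode z (Finset.mem_coe.mpr hz) (fun h => h0 (Finset.mem_coe.mp h)) t ht).continuousAt).continuousWithinAt
  have hcontEdge : ∀ p ∈ Ed n, ContinuousOn (fun t => u t p.2 - u t p.1) (Set.Icc (0:ℝ) T) :=
    fun p hp => (hcontz p.2 (Ed_mem_V hp).2).sub (hcontz p.1 (Ed_mem_V hp).1)
  have hcontE : ContinuousOn (fun t => En n (u t)) (Set.Icc (0:ℝ) T) := by
    unfold En
    apply ContinuousOn.div_const
    apply ContinuousOn.mul continuousOn_const
    apply continuousOn_finset_sum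
    intro p hp
    exact (hcontEdge p hp).pow 2
  have hcontD : ContinuousOn D (Set.Icc (0:ℝ) T) := by
    rw [hD]
    apply continuousOn_finset_sum
    intro x hx
    apply ContinuousOn.mul
    · exact continuousOn_const.mul (hcontz x (Finset.mem_sdiff.mp hx).1)
    · unfold lap
      apply ContinuousOn.mul continuousOn_const
      apply continuousOn_finset_sum
      intro p hp
      have hp' : p ∈ Ed n := Finset.mem_of_mem_filter p hp
      exact (hphi.continuous.comp_continuousOn (hcontz p.2 (Ed_mem_V hp').2)).sub
        (hphi.continuous.comp_continuousOn (hcontz p.1 (Ed_mem_V hp').1))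
  -- pointwise estimate
  have hpt : ∀ t ∈ Set.Icc (0:ℝ) T, D t ≤ -(2 * ε₀ * 3 ^ n * En n (u t)) := by
    intro t ht
    have hsum1 : D t = ∑ x ∈ V n, 2 * u t x * lap n (fun z => phi (u t z)) x := by
      rw [hD]
      apply Finset.sum_subset Finset.sdiff_subset
      intro x hx hxn
      have hx0 : x ∈ V 0 := by
        by_contra h
        exact hxn (Finset.mem_sdiff.mpr ⟨hx, h⟩)
      simp [hV0 t ht x hx0]
    have hsum2 : ∑ x ∈ V n, 2 * u t x * lap n (fun z => phi (u t z)) x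
        = ∑ p ∈ Ed n, 2 * (5:ℝ) ^ n * (u t p.1 * (phi (u t p.2) - phi (u t p.1))) := by
      rw [← Finset.sum_fiberwise_of_maps_to (g := Prod.fst) (t := V n)
        (fun p hp => (Ed_mem_V hp).1)
        (fun p => 2 * (5:ℝ) ^ n * (u t p.1 * (phi (u t p.2) - phi (u t p.1))))]
      apply Finset.sum_congr rfl
      intro x hx
      unfold lap
      rw [Finset.mul_sum, Finset.mul_sum]
      apply Finset.sum_congr rfl
      intro p hp
      have hpx : p.1 = x := (Finset.mem_filter.mp hp).2
      rw [← hpx]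
      ring
    have hsym : ∑ p ∈ Ed n, u t p.1 * (phi (u t p.2) - phi (u t p.1))
        = ∑ p ∈ Ed n, u t p.2 * (phi (u t p.1) - phi (u t p.2)) := by
      apply Finset.sum_nbij' (fun p => (p.2, p.1)) (fun p => (p.2, p.1))
      · intro p hp; exact Ed_symm hp
      · intro p hp; exact Ed_symm hp
      · intro p _; rfl
      · intro p _; rfl
      · intro p _; rfl
    have hkey : 2 * ∑ p ∈ Ed n, u t p.1 * (phi (u t p.2) - phi (u t p.1))
        = ∑ p ∈ Ed n, -((u t p.2 - u t p.1) * (phi (u t p.2) - phi (u t p.1))) := by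
      rw [two_mul]
      nth_rewrite 2 [hsym]
      rw [← Finset.sum_add_distrib]
      exact Finset.sum_congr rfl fun p _ => by ring
    have hDt : D t = (5:ℝ) ^ n * ∑ p ∈ Ed n,
        -((u t p.2 - u t p.1) * (phi (u t p.2) - phi (u t p.1))) := by
      rw [hsum1, hsum2, ← hkey, ← Finset.mul_sum]
      ring
    have hle : ∑ p ∈ Ed n, -((u t p.2 - u t p.1) * (phi (u t p.2) - phi (u t p.1)))
        ≤ ∑ p ∈ Ed n, -(ε₀ * (u t p.2 - u t p.1) ^ 2) := by
      apply Finset.sum_le_sum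
      intro p _
      have := mvt_key hphi (fun r => (hphi' r).1) (u t p.1) (u t p.2)
      nlinarith [this]
    have h5pos : (0:ℝ) < 5 ^ n := by positivity
    have h3pos : (0:ℝ) < 3 ^ n := by positivity
    calc D t ≤ (5:ℝ) ^ n * ∑ p ∈ Ed n, -(ε₀ * (u t p.2 - u t p.1) ^ 2) := by
          rw [hDt]; exact mul_le_mul_of_nonneg_left hle h5pos.le
      _ = -(2 * ε₀ * 3 ^ n * En n (u t)) := by
          unfold En
          have hs : ∑ p ∈ Ed n, -(ε₀ * (u t p.2 - u t p.1) ^ 2)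
              = -(ε₀ * ∑ p ∈ Ed n, (u t p.2 - u t p.1) ^ 2) := by
            rw [Finset.mul_sum, ← Finset.sum_neg_distrib]
          rw [hs]
          have h53 : ((5:ℝ)/3) ^ n = 5 ^ n / 3 ^ n := div_pow 5 3 n
          rw [h53]
          field_simp
  -- FTC and monotonicity
  have huIcc : Set.uIcc (0:ℝ) T = Set.Icc 0 T := Set.uIcc_of_le hT.le
  have hintD : IntervalIntegrable D MeasureTheory.volume 0 T := by
    apply ContinuousOn.intervalIntegrable
    rw [huIcc]; exact hcontD
  have hintE : IntervalIntegrable (fun t => -(2 * ε₀ * 3 ^ n * En n (u t)))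
      MeasureTheory.volume 0 T := by
    apply ContinuousOn.intervalIntegrable
    rw [huIcc]
    exact (continuousOn_const.mul hcontE).neg
  have hFTC : ∫ t in (0:ℝ)..T, D t = (∑ x ∈ B, u T x ^ 2) - ∑ x ∈ B, u 0 x ^ 2 :=
    intervalIntegral.integral_eq_sub_of_hasDerivAt
      (fun t ht => hderiv t (huIcc ▸ ht)) hintD
  have hmono : ∫ t in (0:ℝ)..T, D t
      ≤ ∫ t in (0:ℝ)..T, -(2 * ε₀ * 3 ^ n * En n (u t)) :=
    intervalIntegral.integral_mono_on hT.le hintD hintE hpt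
  have hconst : ∫ t in (0:ℝ)..T, -(2 * ε₀ * 3 ^ n * En n (u t))
      = -(2 * ε₀ * 3 ^ n) * ∫ t in (0:ℝ)..T, En n (u t) := by
    rw [← intervalIntegral.integral_const_mul]
    apply intervalIntegral.integral_congr
    intro t _
    ring
  have hTsum : ∑ x ∈ V n, u T x ^ 2 = ∑ x ∈ B, u T x ^ 2 := by
    symm
    apply Finset.sum_subset Finset.sdiff_subset
    intro x hx hxn
    have hx0 : x ∈ V 0 := by
      by_contra h
      exact hxn (Finset.mem_sdiff.mpr ⟨hx, h⟩)
    simp [hV0 T hTmem x hx0]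
  have h0sum : ∑ x ∈ V n, u 0 x ^ 2 = ∑ x ∈ B, u 0 x ^ 2 := by
    symm
    apply Finset.sum_subset Finset.sdiff_subset
    intro x hx hxn
    have hx0 : x ∈ V 0 := by
      by_contra h
      exact hxn (Finset.mem_sdiff.mpr ⟨hx, h⟩)
    simp [hV0 0 h0mem x hx0]
  rw [hTsum, h0sum]
  have h3pos : (0:ℝ) < 3 ^ n := by positivity
  have key : (∑ x ∈ B, u T x ^ 2) + 2 * ε₀ * 3 ^ n * ∫ t in (0:ℝ)..T, En n (u t)
      ≤ ∑ x ∈ B, u 0 x ^ 2 := by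
    rw [hFTC] at hmono
    rw [hconst] at hmono
    linarith
  rw [div_add' _ _ _ h3pos.ne', div_le_div_iff_of_pos_right h3pos]
  linarith

end
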